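/- Assume n ≤ m, v_max < μ, and 0 < ε ≤ 1/5. Let π* be an optimal allocation and let π be an allocation satisfying |V_i(π) − V_i(π*)| ≤ 2ε·v_max for every agent i. Then every V_i(π) is positive and (1/n) · Σ_i 1/V_i(π) ≤ 2/(μ(1 − 4ε)). -/
import Mathlib


/-- The valuation of agent `i` under allocation `π`: the sum of utilities of goods assigned to `i`. -/
def V {G A : Type*} [Fintype G] [DecidableEq A] (v : G → ℝ) (π : G → A) (i : A) : ℝ :=
  ∑ j ∈ Finset.univ.filter (fun j => π j = i), v j

/-- Nash social welfare: geometric mean of agents' valuations. -/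
noncomputable def NSW {G A : Type*} [Fintype G] [Fintype A] [DecidableEq A]
    (v : G → ℝ) (π : G → A) : ℝ :=
  (∏ i, V v π i) ^ ((1 : ℝ) / (Fintype.card A))

lemma V_nonneg {G A : Type*} [Fintype G] [DecidableEq A] (v : G → ℝ) (hv : ∀ j, 0 < v j)
    (π : G → A) (i : A) : 0 ≤ V v π i :=
  Finset.sum_nonneg fun j _ => (hv j).le

lemma V_as_ite {G A : Type*} [Fintype G] [DecidableEq A] (v : G → ℝ) (π : G → A) (i : A) :
    V v π i = ∑ j, if π j = i then v j else 0 := by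
  rw [V, Finset.sum_filter]

lemma V_update {G A : Type*} [Fintype G] [DecidableEq G] [DecidableEq A]
    (v : G → ℝ) (π : G → A) (j : G) (l i : A) :
    V v (Function.update π j l) i
      = V v π i + (if l = i then v j else 0) - (if π j = i then v j else 0) := by
  rw [V_as_ite, V_as_ite]
  have h : (fun j' => if Function.update π j l j' = i then v j' else 0)
      = Function.update (fun j' => if π j' = i then v j' else 0) j (if l = i then v j else 0) := by
    funext j'
    by_cases hj : j' = j
    · subst hj; simp
    · simp [Function.update_of_ne hj]
  rw [h, Finset.sum_update_of_mem (Finset.mem_univ j), Finset.sdiff_singleton_eq_erase,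
    Finset.sum_erase_eq_sub (Finset.mem_univ j)]
  ring

lemma sum_V {G A : Type*} [Fintype G] [Fintype A] [DecidableEq A] (v : G → ℝ) (π : G → A) :
    ∑ i, V v π i = ∑ j, v j :=
  Finset.sum_fiberwise _ _ _

theorem stmt7 (n m : ℕ) (hn : 0 < n) (hnm : n ≤ m)
    (v : Fin m → ℝ) (hv : ∀ j, 0 < v j)
    (vmax : ℝ) (hvmax : IsGreatest (Set.range v) vmax)
    (hlt : vmax < (∑ j, v j) / n)
    (ε : ℝ)
    (πs : Fin m → Fin n)
    (hopt : ∀ π' : Fin m → Fin n, NSW v π' ≤ NSW v πs)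
    (π : Fin m → Fin n)
    (hclose : ∀ i, |V v π i - V v πs i| ≤ 2 * ε * vmax)
    (hε : 0 < ε) (hε' : ε ≤ 1/5) :
    (∀ i, 0 < V v π i) ∧
      (1 / (n : ℝ)) * ∑ i, 1 / V v π i ≤ 2 / (((∑ j, v j) / n) * (1 - 4 * ε)) := by
  set μ : ℝ := (∑ j, v j) / n with hμ
  have hnR : (0:ℝ) < n := Nat.cast_pos.mpr hn
  have hcard : (Fintype.card (Fin n) : ℝ) = (n : ℝ) := by simp
  have hvmax_le : ∀ j, v j ≤ vmax := fun j => hvmax.2 ⟨j, rfl⟩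
  have hvmax_pos : 0 < vmax := by
    obtain ⟨j, hj⟩ := hvmax.1
    exact hj ▸ hv j
  have hμpos : 0 < μ := lt_trans hvmax_pos hlt
  -- Step 1: all V v πs i are positive
  have hVpos : ∀ i, 0 < V v πs i := by
    -- an allocation with positive NSW
    have hm : 0 < m := lt_of_lt_of_le hn hnm
    set π0 : Fin m → Fin n := fun j => if h : (j : ℕ) < n then ⟨j, h⟩ else ⟨0, hn⟩ with hπ0
    have hπ0pos : ∀ i, 0 < V v π0 i := by
      intro i
      apply Finset.sum_pos (fun j _ => hv j)
      refine ⟨⟨i, lt_of_lt_of_le i.2 hnm⟩, ?_⟩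
      simp only [Finset.mem_filter, Finset.mem_univ, true_and, hπ0]
      simp [i.2]
    have hP0 : 0 < ∏ i, V v π0 i := Finset.prod_pos fun i _ => hπ0pos i
    have hNSW0 : 0 < NSW v π0 := Real.rpow_pos_of_pos hP0 _
    have hPs : ∏ i, V v πs i ≠ 0 := by
      intro hzero
      have hns : NSW v πs = 0 := by
        rw [NSW, hzero, Real.zero_rpow]
        exact one_div_ne_zero (by simp [hn.ne'])
      have := hopt π0
      rw [hns] at this
      linarith
    intro i
    exact (V_nonneg v hv πs i).lt_of_ne'
      (Finset.prod_ne_zero_iff.mp hPs i (Finset.mem_univ i))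
  -- product comparison from NSW optimality
  have hprod_le : ∀ π' : Fin m → Fin n, ∏ i, V v π' i ≤ ∏ i, V v πs i := by
    intro π'
    have h := hopt π'
    rw [NSW, NSW] at h
    have hz : (0:ℝ) < 1 / (Fintype.card (Fin n)) := by
      rw [hcard]; positivity
    exact (Real.rpow_le_rpow_iff (Finset.prod_nonneg fun i _ => V_nonneg v hv π' i)
      (Finset.prod_nonneg fun i _ => V_nonneg v hv πs i) hz).mp h
  -- Step 2: exchange inequality
  have hexch : ∀ (j : Fin m) (i : Fin n), i ≠ πs j → V v πs (πs j) - v j ≤ V v πs i := by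
    intro j i hik
    set k := πs j with hk
    set π' := Function.update πs j i with hπ'
    have hVi : V v π' i = V v πs i + v j := by
      rw [hπ', V_update, if_pos rfl, if_neg (fun h : πs j = i => hik (hk ▸ h.symm))]
      ring
    have hVk : V v π' k = V v πs k - v j := by
      rw [hπ', V_update, if_neg (fun h : i = k => hik h), if_pos hk.symm]
      ring
    have hVo : ∀ l, l ≠ i → l ≠ k → V v π' l = V v πs l := by
      intro l hl1 hl2
      rw [hπ', V_update, if_neg (fun h : i = l => hl1 h.symm),
        if_neg (fun h : πs j = l => hl2 (hk ▸ h.symm))]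
      ring
    -- split products
    have hki : k ∈ Finset.univ.erase i := Finset.mem_erase.mpr ⟨Ne.symm hik, Finset.mem_univ _⟩
    have hsplit : ∀ f : Fin n → ℝ, ∏ l, f l = f i * (f k * ∏ l ∈ (Finset.univ.erase i).erase k, f l) := by
      intro f
      rw [← Finset.mul_prod_erase Finset.univ f (Finset.mem_univ i),
        ← Finset.mul_prod_erase _ f hki]
    have hPeq : ∏ l ∈ (Finset.univ.erase i).erase k, V v π' l
        = ∏ l ∈ (Finset.univ.erase i).erase k, V v πs l := by
      apply Finset.prod_congr rfl
      intro l hl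
      rw [Finset.mem_erase, Finset.mem_erase] at hl
      exact hVo l hl.2.1 hl.1
    have hPpos : 0 < ∏ l ∈ (Finset.univ.erase i).erase k, V v πs l :=
      Finset.prod_pos fun l _ => hVpos l
    have h := hprod_le π'
    rw [hsplit (V v π'), hsplit (V v πs), hVi, hVk, hPeq] at h
    set P := ∏ l ∈ (Finset.univ.erase i).erase k, V v πs l with hPdef
    have h2 : (V v πs i + v j) * (V v πs k - v j) ≤ V v πs i * V v πs k := by
      have h' : ((V v πs i + v j) * (V v πs k - v j)) * P ≤ (V v πs i * V v πs k) * P := by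
        nlinarith [h]
      exact le_of_mul_le_mul_right h' hPpos
    nlinarith [hv j]
  -- Step 3: some agent has value ≥ μ
  obtain ⟨k, _, hkμ⟩ : ∃ k ∈ Finset.univ, μ ≤ V v πs k := by
    by_contra hc
    push_neg at hc
    have hsum : ∑ i, V v πs i < ∑ i : Fin n, μ := by
      apply Finset.sum_lt_sum_of_nonempty ⟨⟨0, hn⟩, Finset.mem_univ _⟩
      intro i _; exact hc i (Finset.mem_univ i)
    rw [sum_V] at hsum
    simp only [Finset.sum_const, Finset.card_univ, Fintype.card_fin, nsmul_eq_mul] at hsum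
    have hsm : (n:ℝ) * μ = ∑ j, v j := by rw [hμ, mul_div_cancel₀ _ hnR.ne']
    linarith
  -- Step 4: every V v πs i ≥ μ/2
  have hhalf : ∀ i, μ / 2 ≤ V v πs i := by
    -- the bundle of k
    set S := Finset.univ.filter (fun j => πs j = k) with hS
    have hSne : S.Nonempty := by
      by_contra hne
      rw [Finset.not_nonempty_iff_eq_empty] at hne
      have : V v πs k = 0 := by rw [V, ← hS, hne, Finset.sum_empty]
      linarith [hVpos k]
    obtain ⟨j0, hj0S, hj0min⟩ := S.exists_min_image v hSne
    have hj0k : πs j0 = k := (Finset.mem_filter.mp hj0S).2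
    -- k has another good
    obtain ⟨j1, hj1S, hj1ne⟩ : ∃ j1 ∈ S, j1 ≠ j0 := by
      by_contra hc
      push_neg at hc
      have : S = {j0} := by
        apply Finset.eq_singleton_iff_unique_mem.mpr ⟨hj0S, fun x hx => hc x hx⟩
      have : V v πs k = v j0 := by rw [V, ← hS, this, Finset.sum_singleton]
      have := hvmax_le j0
      linarith
    have h2vj0 : 2 * v j0 ≤ V v πs k := by
      have hsub : {j0, j1} ⊆ S := by
        intro x hx
        rcases Finset.mem_insert.mp hx with h | h
        · exact h ▸ hj0S
        · exact (Finset.mem_singleton.mp h) ▸ hj1S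
      have : ∑ j ∈ ({j0, j1} : Finset (Fin m)), v j ≤ ∑ j ∈ S, v j :=
        Finset.sum_le_sum_of_subset_of_nonneg hsub (fun j _ _ => (hv j).le)
      rw [Finset.sum_pair (Ne.symm hj1ne)] at this
      have hmin := hj0min j1 hj1S
      rw [V, ← hS]
      linarith
    intro i
    by_cases hik : i = πs j0
    · rw [hik, hj0k]; linarith
    · have := hexch j0 i hik
      rw [hj0k] at this
      linarith
  -- Step 5: conclusion
  have hεb : (0:ℝ) < 1 - 4 * ε := by linarith
  have hlow : ∀ i, μ * (1 - 4 * ε) / 2 ≤ V v π i := by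
    intro i
    have h1 := hclose i
    have h2 := abs_le.mp h1
    have h3 := hhalf i
    have h4 : 2 * ε * vmax ≤ 2 * ε * μ := by nlinarith
    nlinarith
  have hlowpos : 0 < μ * (1 - 4 * ε) / 2 := by positivity
  constructor
  · intro i; exact lt_of_lt_of_le hlowpos (hlow i)
  · have hterm : ∀ i : Fin n, 1 / V v π i ≤ 2 / (μ * (1 - 4 * ε)) := by
      intro i
      rw [div_le_div_iff₀ (lt_of_lt_of_le hlowpos (hlow i)) (by positivity)]
      have := hlow i
      nlinarith
    have hsum : ∑ i, 1 / V v π i ≤ ∑ _i : Fin n, 2 / (μ * (1 - 4 * ε)) :=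
      Finset.sum_le_sum fun i _ => hterm i
    simp only [Finset.sum_const, Finset.card_univ, Fintype.card_fin, nsmul_eq_mul] at hsum
    calc (1 / (n:ℝ)) * ∑ i, 1 / V v π i ≤ (1 / (n:ℝ)) * ((n:ℝ) * (2 / (μ * (1 - 4 * ε)))) := by
          apply mul_le_mul_of_nonneg_left hsum (by positivity)
      _ = 2 / (μ * (1 - 4 * ε)) := by field_simp
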